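/- Let β > 1 and c > 0 be real numbers, let S be a nonempty finite set, and let l : S → ℤ be a level assignment such that for every integer L the number of elements e ∈ S with l(e) ≤ L is at most c·β^{L+3}. Then ∑_{e ∈ S} β^{−l(e)} ≤ β³·c·(ln |S| + 1). -/

import Mathlib

open Finset

/-- Key combinatorial lemma: summing reciprocals of the "rank counts" is at most
the harmonic number. -/
lemma sum_inv_rank_le_harmonic {α : Type*} (l : α → ℤ) :
    ∀ (S : Finset α),
      ∑ e ∈ S, (1 : ℝ) / ((S.filter fun e' => l e' ≤ l e).card : ℝ) ≤ harmonic S.card := by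
  intro S
  induction S using Finset.strongInduction with
  | _ S ih =>
    classical
    rcases S.eq_empty_or_nonempty with rfl | hne
    · simp [harmonic]
    · obtain ⟨m, hmS, hm⟩ := S.exists_max_image l hne
      set S' := S.erase m with hS'
      have hSsub : S' ⊂ S := Finset.erase_ssubset hmS
      have hcard : S.card = S'.card + 1 := by
        have h1 : 0 < S.card := Finset.card_pos.mpr hne
        rw [hS', Finset.card_erase_of_mem hmS]
        omega
      have hfilterm : S.filter (fun e' => l e' ≤ l m) = S := by
        apply Finset.filter_true_of_mem
        intro x hx; exact hm x hx
      have hsum : ∑ e ∈ S, (1 : ℝ) / ((S.filter fun e' => l e' ≤ l e).card : ℝ)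
          = (∑ e ∈ S', (1 : ℝ) / ((S.filter fun e' => l e' ≤ l e).card : ℝ))
            + 1 / ((S.filter fun e' => l e' ≤ l m).card : ℝ) := by
        rw [hS', Finset.sum_erase_add S _ hmS]
      rw [hsum, hfilterm]
      have hstep : ∀ e ∈ S', (1 : ℝ) / ((S.filter fun e' => l e' ≤ l e).card : ℝ)
          ≤ 1 / ((S'.filter fun e' => l e' ≤ l e).card : ℝ) := by
        intro e he
        have h1 : (S'.filter fun e' => l e' ≤ l e) ⊆ (S.filter fun e' => l e' ≤ l e) :=
          Finset.filter_subset_filter _ (Finset.erase_subset _ _)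
        have hpos : 0 < (S'.filter fun e' => l e' ≤ l e).card := by
          apply Finset.card_pos.mpr
          exact ⟨e, Finset.mem_filter.mpr ⟨he, le_refl _⟩⟩
        apply one_div_le_one_div_of_le
        · exact_mod_cast hpos
        · exact_mod_cast Finset.card_le_card h1
      calc (∑ e ∈ S', (1 : ℝ) / ((S.filter fun e' => l e' ≤ l e).card : ℝ)) + 1 / (S.card : ℝ)
          ≤ (∑ e ∈ S', (1 : ℝ) / ((S'.filter fun e' => l e' ≤ l e).card : ℝ)) + 1 / (S.card : ℝ) := by
            exact add_le_add (Finset.sum_le_sum hstep) le_rfl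
        _ ≤ (harmonic S'.card : ℝ) + 1 / (S.card : ℝ) := by
            gcongr
            exact ih S' hSsub
        _ = (harmonic S.card : ℝ) := by
            rw [hcard, harmonic_succ]
            push_cast
            ring

/-- Per-set harmonic bound (Equation (22)): if for every level L the number of
elements of S at level ≤ L is at most c·β^{L+3}, then the total dual weight of S
is at most β³·c·(ln |S| + 1). -/
theorem per_set_harmonic_bound {α : Type*} (β c : ℝ) (hβ : 1 < β) (hc : 0 < c)
    (S : Finset α) (hS : S.Nonempty) (l : α → ℤ)
    (hcount : ∀ L : ℤ, (((S.filter fun e => l e ≤ L)).card : ℝ) ≤ c * β ^ (L + 3)) :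
    ∑ e ∈ S, β ^ (-(l e)) ≤ β ^ (3 : ℕ) * c * (Real.log S.card + 1) := by
  have hβ0 : (0 : ℝ) < β := lt_trans one_pos hβ
  -- pointwise bound: β^{-l e} ≤ β³ c / N(e)
  have hpt : ∀ e ∈ S, β ^ (-(l e)) ≤ β ^ (3 : ℕ) * c *
      (1 / ((S.filter fun e' => l e' ≤ l e).card : ℝ)) := by
    intro e he
    set N : ℝ := ((S.filter fun e' => l e' ≤ l e).card : ℝ) with hN
    have hNpos : 0 < N := by
      have h2 : 0 < (S.filter fun e' => l e' ≤ l e).card :=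
        Finset.card_pos.mpr ⟨e, Finset.mem_filter.mpr ⟨he, le_refl _⟩⟩
      rw [hN]; exact_mod_cast h2
    have hcnt := hcount (l e)
    have hz : β ^ (-(l e)) * β ^ (l e + 3) = β ^ (3 : ℕ) := by
      rw [← zpow_natCast β 3, ← zpow_add₀ (ne_of_gt hβ0)]
      norm_num
    have hmul : β ^ (-(l e)) * N ≤ β ^ (3 : ℕ) * c := by
      have h3 := mul_le_mul_of_nonneg_left hcnt (le_of_lt (zpow_pos hβ0 (-(l e))))
      calc β ^ (-(l e)) * N ≤ β ^ (-(l e)) * (c * β ^ (l e + 3)) := h3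
        _ = β ^ (-(l e)) * β ^ (l e + 3) * c := by ring
        _ = β ^ (3 : ℕ) * c := by rw [hz]
    calc β ^ (-(l e)) ≤ β ^ (3:ℕ) * c / N := (le_div_iff₀ hNpos).mpr hmul
      _ = β ^ (3:ℕ) * c * (1 / N) := by ring
  have hsum := Finset.sum_le_sum hpt
  have hrank := sum_inv_rank_le_harmonic l S
  have hharm : (harmonic S.card : ℝ) ≤ Real.log S.card + 1 := by
    have := harmonic_le_one_add_log S.card
    linarith
  have hβ3c : (0 : ℝ) ≤ β ^ (3:ℕ) * c := by positivity
  calc ∑ e ∈ S, β ^ (-(l e))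
      ≤ ∑ e ∈ S, β ^ (3:ℕ) * c * (1 / ((S.filter fun e' => l e' ≤ l e).card : ℝ)) := hsum
    _ = β ^ (3:ℕ) * c * ∑ e ∈ S, (1 : ℝ) / ((S.filter fun e' => l e' ≤ l e).card : ℝ) := by
        rw [Finset.mul_sum]
    _ ≤ β ^ (3:ℕ) * c * (harmonic S.card : ℝ) := by
        exact mul_le_mul_of_nonneg_left hrank hβ3c
    _ ≤ β ^ (3:ℕ) * c * (Real.log S.card + 1) := by
        exact mul_le_mul_of_nonneg_left hharm hβ3c
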